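/- Let E be a complex inner product space of dimension at least 2, let H₁ and H₂ be self-adjoint operators on E with H₂ positive semi-definite, let η ∈ E be a unit vector with H₁ η = 0, and let Δ > 0 be such that ⟨x, H₁ x⟩ ≥ Δ‖x‖² for every vector x orthogonal to η. Set H := H₁ + H₂ and assume ⟨η, H η⟩ ≤ 1. Let λ₀(H) ≤ λ₁(H) be the two smallest eigenvalues of H (counted with multiplicity), with corresponding orthonormal eigenvectors φ₀ and φ₁. Then λ₁(H) ≥ Δ − 1, and the spectral gap satisfies λ₁(H) − λ₀(H) ≥ Δ − 2. -/

import Mathlib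

/-- Spectral gap of the gap-amplified clock Hamiltonian `H = H₁ + H₂`: if `η` is a
unit null vector of `H₁`, `H₁` penalizes the orthogonal complement of `η` by `Δ`,
`H₂` is positive semi-definite, and `⟨η, H η⟩ ≤ 1`, then the second smallest
eigenvalue `λ₁(H)` satisfies `λ₁(H) ≥ Δ − 1` and the spectral gap satisfies
`λ₁(H) − λ₀(H) ≥ Δ − 2`. -/
theorem spectral_gap_lower_bound
    {E : Type*} [NormedAddCommGroup E] [InnerProductSpace ℂ E] [FiniteDimensional ℂ E]
    (hdim : 2 ≤ Module.finrank ℂ E)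
    (H₁ H₂ : E →L[ℂ] E) (h₁ : IsSelfAdjoint H₁) (h₂ : IsSelfAdjoint H₂)
    (hpsd : ∀ x : E, 0 ≤ (inner ℂ x (H₂ x) : ℂ).re)
    (η : E) (hη : ‖η‖ = 1) (hker : H₁ η = 0)
    (Δ : ℝ) (hΔ : 0 < Δ)
    (hgap : ∀ x : E, (inner ℂ η x : ℂ) = 0 → Δ * ‖x‖ ^ 2 ≤ (inner ℂ x (H₁ x) : ℂ).re)
    (hE : ((inner ℂ η ((H₁ + H₂) η) : ℂ)).re ≤ 1)
    -- `lam0 ≤ lam1` are the two smallest eigenvalues of `H = H₁ + H₂`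
    -- (counted with multiplicity), with orthonormal eigenvectors `φ0`, `φ1`:
    (lam0 lam1 : ℝ) (hle : lam0 ≤ lam1)
    (φ0 φ1 : E) (hφ0 : ‖φ0‖ = 1) (hφ1 : ‖φ1‖ = 1) (horth : (inner ℂ φ0 φ1 : ℂ) = 0)
    (heig0 : (H₁ + H₂) φ0 = (lam0 : ℂ) • φ0) (heig1 : (H₁ + H₂) φ1 = (lam1 : ℂ) • φ1)
    (hmin0 : ∀ x : E, ‖x‖ = 1 → lam0 ≤ (inner ℂ x ((H₁ + H₂) x) : ℂ).re)
    (hmin1 : ∀ x : E, ‖x‖ = 1 → (inner ℂ φ0 x : ℂ) = 0 →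
      lam1 ≤ (inner ℂ x ((H₁ + H₂) x) : ℂ).re) :
    Δ - 1 ≤ lam1 ∧ Δ - 2 ≤ lam1 - lam0 := by
  have hlam0 : lam0 ≤ 1 := le_trans (hmin0 η hη) hE
  have horth' : (inner ℂ φ1 φ0 : ℂ) = 0 := by
    rw [← inner_conj_symm, horth, map_zero]
  have h00 : (inner ℂ φ0 φ0 : ℂ) = 1 := by
    rw [inner_self_eq_norm_sq_to_K, hφ0]; norm_num
  have h11 : (inner ℂ φ1 φ1 : ℂ) = 1 := by
    rw [inner_self_eq_norm_sq_to_K, hφ1]; norm_num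
  have hmain : Δ ≤ lam1 := by
    set a : ℂ := inner ℂ η φ1 with ha
    set b : ℂ := -(inner ℂ η φ0) with hb
    by_cases hz : a = 0 ∧ b = 0
    · -- η orthogonal to φ1; test φ1 directly
      have hgap1 := hgap φ1 hz.1
      rw [hφ1] at hgap1
      have hpsd1 := hpsd φ1
      have hval : (inner ℂ φ1 ((H₁ + H₂) φ1) : ℂ).re = lam1 := by
        rw [heig1, inner_smul_right, h11]
        simp
      have : (inner ℂ φ1 ((H₁ + H₂) φ1) : ℂ).re
          = (inner ℂ φ1 (H₁ φ1) : ℂ).re + (inner ℂ φ1 (H₂ φ1) : ℂ).re := by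
        simp [inner_add_right]
      nlinarith
    · set x : E := a • φ0 + b • φ1 with hx
      have hox : (inner ℂ η x : ℂ) = 0 := by
        simp only [hx, inner_add_right, inner_smul_right, ha, hb]
        ring
      have hnx : ‖x‖ ^ 2 = Complex.normSq a + Complex.normSq b := by
        have hxx : (inner ℂ x x : ℂ) = Complex.normSq a + Complex.normSq b := by
          simp only [hx, inner_add_left, inner_add_right, inner_smul_left,
            inner_smul_right, horth, horth', h00, h11]
          simp [Complex.normSq_eq_conj_mul_self]
          ring
        have h2 : (inner ℂ x x : ℂ).re = ‖x‖ ^ 2 := @inner_self_eq_norm_sq ℂ E _ _ _ x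
        rw [← h2, hxx]
        norm_num
      have hHx : (H₁ + H₂) x = (a * lam0) • φ0 + (b * lam1) • φ1 := by
        simp only [hx, map_add, map_smul, heig0, heig1, smul_smul]
      have hval : (inner ℂ x ((H₁ + H₂) x) : ℂ).re
          = Complex.normSq a * lam0 + Complex.normSq b * lam1 := by
        rw [hHx]
        simp only [hx, inner_add_left, inner_add_right, inner_smul_left,
          inner_smul_right, horth, horth', h00, h11]
        simp [Complex.normSq_apply]
        ring
      have hgx := hgap x hox
      have hpsdx := hpsd x
      have hsum : (inner ℂ x ((H₁ + H₂) x) : ℂ).re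
          = (inner ℂ x (H₁ x) : ℂ).re + (inner ℂ x (H₂ x) : ℂ).re := by
        simp [inner_add_right]
      have hpos : 0 < Complex.normSq a + Complex.normSq b := by
        rcases not_and_or.mp hz with h | h
        · have h1 := Complex.normSq_pos.mpr h
          have h2 := Complex.normSq_nonneg b
          linarith
        · have h1 := Complex.normSq_pos.mpr h
          have h2 := Complex.normSq_nonneg a
          linarith
      have key : Δ * (Complex.normSq a + Complex.normSq b)
          ≤ Complex.normSq a * lam0 + Complex.normSq b * lam1 := by
        rw [← hnx, ← hval]
        nlinarith
      nlinarith [Complex.normSq_nonneg a, Complex.normSq_nonneg b]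
  exact ⟨by linarith, by linarith⟩
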